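/- The set of k-scoped words over an n-stack partitioned visibly pushdown alphabet is closed under well-matched concatenation: if u and v are k-scoped words in each of which every call of every stack has a matching return within the same word, then uv is k-scoped. -/

import Mathlib

inductive SymKind : Type
  | call | ret | intern
deriving DecidableEq

/-- Stack-semantics matching for stack `h`: scan the word left-to-right,
ignoring all symbols not belonging to stack `h`, pushing call positions of
stack `h` and popping on return positions of stack `h`. -/
def mpairsH {σ : Type*} {n : ℕ} (st : σ → Fin n) (kind : σ → SymKind) (h : Fin n) :
    List σ → ℕ → List ℕ → List (ℕ × ℕ)
  | [], _, _ => []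
  | a :: rest, i, stk =>
    if st a = h then
      match kind a with
      | SymKind.call => mpairsH st kind h rest (i + 1) (i :: stk)
      | SymKind.ret =>
        match stk with
        | [] => mpairsH st kind h rest (i + 1) []
        | c :: stk' => (c, i) :: mpairsH st kind h rest (i + 1) stk'
      | SymKind.intern => mpairsH st kind h rest (i + 1) stk
    else mpairsH st kind h rest (i + 1) stk

/-- `i` and `j` are a matched call–return pair of stack `h` in `w`. -/
def MatchedH {σ : Type*} {n : ℕ} (st : σ → Fin n) (kind : σ → SymKind)
    (h : Fin n) (w : List σ) (i j : ℕ) : Prop :=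
  (i, j) ∈ mpairsH st kind h w 0 []

/-- Position `p` starts a maximal stack-`h` context of `w`. -/
def StartsCtx {σ : Type*} {n : ℕ} (st : σ → Fin n) (h : Fin n) (w : List σ)
    (p : ℕ) : Prop :=
  (∃ a, w[p]? = some a ∧ st a = h) ∧
  (p = 0 ∨ ∀ b, w[p - 1]? = some b → st b ≠ h)

/-- Index (counting from 1) of the maximal stack-`h` context containing or
preceding position `i`: the number of maximal stack-`h` contexts starting at
or before `i`. -/
noncomputable def ctxIdx {σ : Type*} {n : ℕ} (st : σ → Fin n) (h : Fin n)
    (w : List σ) (i : ℕ) : ℕ :=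
  Nat.card {p : ℕ // p ≤ i ∧ StartsCtx st h w p}

/-- `w` is `k`-scoped: every matched return of stack `h` lies within at most
`k` maximal stack-`h` contexts from the one containing its call (inclusive). -/
def KScoped {σ : Type*} {n : ℕ} (st : σ → Fin n) (kind : σ → SymKind) (k : ℕ)
    (w : List σ) : Prop :=
  ∀ (h : Fin n) (i j : ℕ), MatchedH st kind h w i j →
    ctxIdx st h w j < ctxIdx st h w i + k


/-- `w` is well-matched: for every stack, every call position has a matching
return and every return position has a matching call. -/
def WellMatchedAll {σ : Type*} {n : ℕ} (st : σ → Fin n) (kind : σ → SymKind)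
    (w : List σ) : Prop :=
  ∀ h : Fin n,
    (∀ i a, w[i]? = some a → st a = h → kind a = SymKind.call →
      ∃ j, MatchedH st kind h w i j) ∧
    (∀ j a, w[j]? = some a → st a = h → kind a = SymKind.ret →
      ∃ i, MatchedH st kind h w i j)

namespace KScopedAux

variable {σ : Type*} {n : ℕ} (st : σ → Fin n) (kind : σ → SymKind) (h : Fin n)

/-- The stack remaining after scanning `w` with initial index `i` and stack `stk`. -/
def stkAfter : List σ → ℕ → List ℕ → List ℕ
  | [], _, stk => stk
  | a :: rest, i, stk =>
    if st a = h then
      match kind a with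
      | SymKind.call => stkAfter rest (i + 1) (i :: stk)
      | SymKind.ret =>
        match stk with
        | [] => stkAfter rest (i + 1) []
        | _ :: stk' => stkAfter rest (i + 1) stk'
      | SymKind.intern => stkAfter rest (i + 1) stk
    else stkAfter rest (i + 1) stk

lemma mpairs_append (u : List σ) : ∀ (v : List σ) (i : ℕ) (stk : List ℕ),
    mpairsH st kind h (u ++ v) i stk =
      mpairsH st kind h u i stk ++
        mpairsH st kind h v (i + u.length) (stkAfter st kind h u i stk) := by
  induction u with
  | nil => intro v i stk; simp [mpairsH, stkAfter]
  | cons a rest ih =>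
    intro v i stk
    have hlen : i + (rest.length + 1) = (i + 1) + rest.length := by omega
    by_cases hst : st a = h
    · cases hkd : kind a with
      | call => simp [mpairsH, stkAfter, hst, hkd, ih, hlen]
      | ret =>
        cases stk with
        | nil => simp [mpairsH, stkAfter, hst, hkd, ih, hlen]
        | cons c stk' => simp [mpairsH, stkAfter, hst, hkd, ih, hlen]
      | intern => simp [mpairsH, stkAfter, hst, hkd, ih, hlen]
    · simp [mpairsH, stkAfter, hst, ih, hlen]

lemma mpairs_shift (w : List σ) : ∀ (i d : ℕ) (stk : List ℕ),
    mpairsH st kind h w (i + d) (stk.map (· + d)) =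
      (mpairsH st kind h w i stk).map (fun p => (p.1 + d, p.2 + d)) := by
  induction w with
  | nil => intro i d stk; simp [mpairsH]
  | cons a rest ih =>
    intro i d stk
    have h1 : i + d + 1 = (i + 1) + d := by omega
    by_cases hst : st a = h
    · cases hkd : kind a with
      | call =>
        simp only [mpairsH, hst, hkd, if_true, h1]
        simpa using ih (i + 1) d (i :: stk)
      | ret =>
        cases stk with
        | nil =>
          simp only [mpairsH, hst, hkd, if_true, List.map_nil, h1]
          simpa using ih (i + 1) d []
        | cons c stk' =>
          simp only [mpairsH, hst, hkd, if_true, List.map_cons, h1]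
          refine List.cons_eq_cons.2 ⟨rfl, ?_⟩
          simpa using ih (i + 1) d stk'
      | intern =>
        simp only [mpairsH, hst, hkd, if_true, h1]
        simpa using ih (i + 1) d stk
    · simp only [mpairsH, if_neg hst, h1]
      simpa using ih (i + 1) d stk

lemma mpairs_bound (w : List σ) : ∀ (i0 : ℕ) (stk : List ℕ),
    (∀ x ∈ stk, x < i0) → ∀ i j, (i, j) ∈ mpairsH st kind h w i0 stk →
      i < j ∧ j < i0 + w.length := by
  induction w with
  | nil => intro i0 stk _ i j hm; simp [mpairsH] at hm
  | cons a rest ih =>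
    intro i0 stk hstk i j hm
    have hlen : i0 + (a :: rest).length = (i0 + 1) + rest.length := by
      simp [List.length_cons]; omega
    rw [hlen]
    by_cases hst : st a = h
    · cases hkd : kind a with
      | call =>
        simp only [mpairsH, hst, hkd, if_true] at hm
        refine ih (i0 + 1) (i0 :: stk) ?_ i j hm
        intro x hx; rcases List.mem_cons.1 hx with rfl | hx
        · omega
        · exact Nat.lt_succ_of_lt (hstk x hx)
      | ret =>
        cases stk with
        | nil =>
          simp only [mpairsH, hst, hkd, if_true] at hm
          exact ih (i0 + 1) [] (by simp) i j hm
        | cons c stk' =>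
          simp only [mpairsH, hst, hkd, if_true, List.mem_cons] at hm
          rcases hm with hm | hm
          · have : i = c ∧ j = i0 := by exact ⟨congrArg Prod.fst hm, congrArg Prod.snd hm⟩
            obtain ⟨rfl, rfl⟩ := this
            constructor
            · exact hstk i (by simp)
            · omega
          · refine ih (i0 + 1) stk' ?_ i j hm
            intro x hx; exact Nat.lt_succ_of_lt (hstk x (by simp [hx]))
      | intern =>
        simp only [mpairsH, hst, hkd, if_true] at hm
        refine ih (i0 + 1) stk ?_ i j hm
        intro x hx; exact Nat.lt_succ_of_lt (hstk x hx)
    · simp only [mpairsH, if_neg hst] at hm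
      refine ih (i0 + 1) stk ?_ i j hm
      intro x hx; exact Nat.lt_succ_of_lt (hstk x hx)

lemma mem_stkAfter (w : List σ) : ∀ (i0 : ℕ) (stk : List ℕ) (c : ℕ),
    c ∈ stkAfter st kind h w i0 stk →
      c ∈ stk ∨ (i0 ≤ c ∧ ∃ a, w[c - i0]? = some a ∧ st a = h ∧
        kind a = SymKind.call) := by
  induction w with
  | nil => intro i0 stk c hc; simp [stkAfter] at hc; exact Or.inl hc
  | cons a rest ih =>
    intro i0 stk c hc
    have step : ∀ stk' : List ℕ, c ∈ stk' ∨ (i0 + 1 ≤ c ∧ ∃ b, rest[c - (i0+1)]? = some b ∧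
        st b = h ∧ kind b = SymKind.call) →
        c ∈ stk' ∨ (i0 ≤ c ∧ ∃ b, (a :: rest)[c - i0]? = some b ∧ st b = h ∧
          kind b = SymKind.call) := by
      intro stk' hh
      rcases hh with hh | ⟨hle, b, hb, hbs, hbk⟩
      · exact Or.inl hh
      · refine Or.inr ⟨by omega, b, ?_, hbs, hbk⟩
        have : c - i0 = (c - (i0 + 1)) + 1 := by omega
        rw [this, List.getElem?_cons_succ]; exact hb
    by_cases hst : st a = h
    · cases hkd : kind a with
      | call =>
        simp only [stkAfter, hst, hkd, if_true] at hc
        rcases step (i0 :: stk) (ih (i0 + 1) (i0 :: stk) c hc) with hh | hh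
        · rcases List.mem_cons.1 hh with rfl | hh
          · refine Or.inr ⟨le_refl _, a, ?_, hst, hkd⟩
            simp
          · exact Or.inl hh
        · exact Or.inr hh
      | ret =>
        cases stk with
        | nil =>
          simp only [stkAfter, hst, hkd, if_true] at hc
          rcases step [] (ih (i0 + 1) [] c hc) with hh | hh
          · simp at hh
          · exact Or.inr hh
        | cons c' stk' =>
          simp only [stkAfter, hst, hkd, if_true] at hc
          rcases step stk' (ih (i0 + 1) stk' c hc) with hh | hh
          · exact Or.inl (by simp [hh])
          · exact Or.inr hh
      | intern =>
        simp only [stkAfter, hst, hkd, if_true] at hc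
        exact step stk (ih (i0 + 1) stk c hc)
    · simp only [stkAfter, if_neg hst] at hc
      exact step stk (ih (i0 + 1) stk c hc)

lemma no_pair (w : List σ) : ∀ (i0 : ℕ) (stk : List ℕ), stk.Nodup →
    (∀ x ∈ stk, x < i0) → ∀ c ∈ stkAfter st kind h w i0 stk, ∀ j,
      (c, j) ∉ mpairsH st kind h w i0 stk := by
  induction w with
  | nil => intro i0 stk _ _ c _ j hm; simp [mpairsH] at hm
  | cons a rest ih =>
    intro i0 stk hnd hlt c hc j hm
    by_cases hst : st a = h
    · cases hkd : kind a with
      | call =>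
        simp only [stkAfter, hst, hkd, if_true] at hc
        simp only [mpairsH, hst, hkd, if_true] at hm
        refine ih (i0 + 1) (i0 :: stk) ?_ ?_ c hc j hm
        · exact List.nodup_cons.2 ⟨fun hx => absurd (hlt _ hx) (by omega), hnd⟩
        · intro x hx; rcases List.mem_cons.1 hx with rfl | hx
          · omega
          · exact Nat.lt_succ_of_lt (hlt x hx)
      | ret =>
        cases stk with
        | nil =>
          simp only [stkAfter, hst, hkd, if_true] at hc
          simp only [mpairsH, hst, hkd, if_true] at hm
          exact ih (i0 + 1) [] (by simp) (by simp) c hc j hm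
        | cons c' stk' =>
          simp only [stkAfter, hst, hkd, if_true] at hc
          simp only [mpairsH, hst, hkd, if_true, List.mem_cons] at hm
          rcases hm with hm | hm
          · have hcc : c = c' := congrArg Prod.fst hm
            subst hcc
            rcases mem_stkAfter st kind h rest (i0 + 1) stk' c hc with hh | ⟨hle, _⟩
            · exact (List.nodup_cons.1 hnd).1 hh
            · have := hlt c (by simp); omega
          · refine ih (i0 + 1) stk' (List.nodup_cons.1 hnd).2 ?_ c hc j hm
            intro x hx; exact Nat.lt_succ_of_lt (hlt x (by simp [hx]))
      | intern =>
        simp only [stkAfter, hst, hkd, if_true] at hc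
        simp only [mpairsH, hst, hkd, if_true] at hm
        exact ih (i0 + 1) stk hnd (fun x hx => Nat.lt_succ_of_lt (hlt x hx)) c hc j hm
    · simp only [stkAfter, if_neg hst] at hc
      simp only [mpairsH, if_neg hst] at hm
      exact ih (i0 + 1) stk hnd (fun x hx => Nat.lt_succ_of_lt (hlt x hx)) c hc j hm

lemma stkAfter_nil_of_wm (u : List σ)
    (hwm : ∀ i a, u[i]? = some a → st a = h → kind a = SymKind.call →
      ∃ j, (i, j) ∈ mpairsH st kind h u 0 []) :
    stkAfter st kind h u 0 [] = [] := by
  by_contra hne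
  obtain ⟨c, hc⟩ := List.exists_mem_of_ne_nil _ hne
  rcases mem_stkAfter st kind h u 0 [] c hc with hh | ⟨_, a, ha, has, hak⟩
  · simp at hh
  · simp only [Nat.sub_zero] at ha
    obtain ⟨j, hj⟩ := hwm c a ha has hak
    exact no_pair st kind h u 0 [] (by simp) (by simp) c hc j hj


lemma startsCtx_lt {w : List σ} {p : ℕ} (hp : StartsCtx st h w p) : p < w.length := by
  obtain ⟨⟨a, ha, -⟩, -⟩ := hp
  rw [List.getElem?_eq_some_iff] at ha; exact ha.1

lemma startsCtx_append_left {u v : List σ} {p : ℕ} (hp : p < u.length) :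
    StartsCtx st h (u ++ v) p ↔ StartsCtx st h u p := by
  unfold StartsCtx
  rw [List.getElem?_append_left hp,
    List.getElem?_append_left (by omega : p - 1 < u.length)]

lemma startsCtx_append_right {u v : List σ} {r : ℕ} (hr : 1 ≤ r) :
    StartsCtx st h (u ++ v) (u.length + r) ↔ StartsCtx st h v r := by
  unfold StartsCtx
  rw [List.getElem?_append_right (by omega : u.length ≤ u.length + r),
    List.getElem?_append_right (by omega : u.length ≤ u.length + r - 1)]
  have h1 : u.length + r - u.length = r := by omega
  have h2 : u.length + r - 1 - u.length = r - 1 := by omega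
  rw [h1, h2]
  constructor
  · rintro ⟨ha, hb⟩
    exact ⟨ha, Or.inr (hb.resolve_left (by omega))⟩
  · rintro ⟨ha, hb⟩
    refine ⟨ha, ?_⟩
    rcases hb with hb | hb
    · exact absurd hb (by omega)
    · exact Or.inr hb

lemma startsCtx_boundary {u v : List σ} (hp : StartsCtx st h (u ++ v) u.length) :
    StartsCtx st h v 0 := by
  obtain ⟨⟨a, ha, has⟩, -⟩ := hp
  rw [List.getElem?_append_right (le_refl _), Nat.sub_self] at ha
  exact ⟨⟨a, ha, has⟩, Or.inl rfl⟩

lemma ctxIdx_eq (w : List σ) (i : ℕ) :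
    ctxIdx st h w i = ({p | p ≤ i ∧ StartsCtx st h w p} : Set ℕ).ncard :=
  Nat.card_coe_set_eq _

lemma ctxSet_finite (P : ℕ → Prop) (i : ℕ) : ({p | p ≤ i ∧ P p} : Set ℕ).Finite :=
  (Set.finite_Iic i).subset (fun p hp => hp.1)

lemma ctxIdx_append_left {u : List σ} (v : List σ) {i : ℕ} (hi : i < u.length) :
    ctxIdx st h (u ++ v) i = ctxIdx st h u i := by
  rw [ctxIdx_eq, ctxIdx_eq]
  congr 1
  ext p
  simp only [Set.mem_setOf_eq]
  exact and_congr_right fun hp => startsCtx_append_left st h (lt_of_le_of_lt hp hi)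

lemma exists_delta (u v : List σ) : ∃ δ : ℕ, ∀ q : ℕ,
    ctxIdx st h (u ++ v) (u.length + q) + δ =
      ({p | StartsCtx st h u p} : Set ℕ).ncard + ctxIdx st h v q := by
  set U : Set ℕ := {p | StartsCtx st h u p} with hU
  have hUfin : U.Finite :=
    (Set.finite_Iio u.length).subset (fun p hp => startsCtx_lt st h hp)
  have step1 : ∀ q : ℕ, ctxIdx st h (u ++ v) (u.length + q) =
      U.ncard + ({r | r ≤ q ∧ StartsCtx st h (u ++ v) (u.length + r)} : Set ℕ).ncard := by
    intro q
    have hset : {p | p ≤ u.length + q ∧ StartsCtx st h (u ++ v) p} =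
        U ∪ ((u.length + ·) '' {r | r ≤ q ∧ StartsCtx st h (u ++ v) (u.length + r)}) := by
      ext p
      simp only [Set.mem_setOf_eq, Set.mem_union, Set.mem_image, hU]
      constructor
      · rintro ⟨hpq, hsc⟩
        by_cases hlt : p < u.length
        · exact Or.inl ((startsCtx_append_left st h hlt).1 hsc)
        · refine Or.inr ⟨p - u.length, ⟨by omega, ?_⟩, by omega⟩
          have : u.length + (p - u.length) = p := by omega
          rwa [this]
      · rintro (hp | ⟨r, ⟨hrq, hsc⟩, rfl⟩)
        · have hlt := startsCtx_lt st h hp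
          exact ⟨by omega, (startsCtx_append_left st h hlt).2 hp⟩
        · exact ⟨by omega, hsc⟩
    have hdisj : Disjoint U ((u.length + ·) '' {r | r ≤ q ∧ StartsCtx st h (u ++ v) (u.length + r)}) := by
      rw [Set.disjoint_left]
      rintro p hp ⟨r, -, rfl⟩
      have h2 : u.length + r < u.length := startsCtx_lt st h hp
      omega
    have hinj : Function.Injective (u.length + ·) := fun a b hab => by
      simpa using hab
    rw [ctxIdx_eq, hset,
      Set.ncard_union_eq hdisj hUfin ((ctxSet_finite _ q).image _),
      Set.ncard_image_of_injective _ hinj]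
  have hWv : ∀ q : ℕ, ctxIdx st h v q = ({r | r ≤ q ∧ StartsCtx st h v r} : Set ℕ).ncard :=
    fun q => ctxIdx_eq st h v q
  by_cases hb : StartsCtx st h (u ++ v) u.length
  · refine ⟨0, fun q => ?_⟩
    have hVW : ({r | r ≤ q ∧ StartsCtx st h (u ++ v) (u.length + r)} : Set ℕ) =
        {r | r ≤ q ∧ StartsCtx st h v r} := by
      ext r
      simp only [Set.mem_setOf_eq]
      rcases Nat.eq_zero_or_pos r with rfl | hr
      · simp only [Nat.add_zero]
        exact and_congr_right fun _ => ⟨fun _ => startsCtx_boundary st h hb, fun _ => hb⟩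
      · exact and_congr_right fun _ => startsCtx_append_right st h hr
    rw [step1 q, hVW, hWv q]
    omega
  · by_cases hv0 : StartsCtx st h v 0
    · refine ⟨1, fun q => ?_⟩
      have hVW : ({r | r ≤ q ∧ StartsCtx st h (u ++ v) (u.length + r)} : Set ℕ) =
          {r | r ≤ q ∧ StartsCtx st h v r} \ {0} := by
        ext r
        simp only [Set.mem_setOf_eq, Set.mem_diff, Set.mem_singleton_iff]
        rcases Nat.eq_zero_or_pos r with rfl | hr
        · simp only [Nat.add_zero]
          constructor
          · rintro ⟨-, hsc⟩; exact absurd hsc hb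
          · rintro ⟨-, hne⟩; exact absurd trivial hne
        · constructor
          · rintro ⟨hrq, hsc⟩
            exact ⟨⟨hrq, (startsCtx_append_right st h hr).1 hsc⟩, by omega⟩
          · rintro ⟨⟨hrq, hsc⟩, -⟩
            exact ⟨hrq, (startsCtx_append_right st h hr).2 hsc⟩
      have h0W : (0 : ℕ) ∈ ({r | r ≤ q ∧ StartsCtx st h v r} : Set ℕ) :=
        ⟨Nat.zero_le q, hv0⟩
      have hcard := Set.ncard_diff_singleton_add_one h0W (ctxSet_finite _ q)
      rw [step1 q, hVW, hWv q]
      omega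
    · refine ⟨0, fun q => ?_⟩
      have hVW : ({r | r ≤ q ∧ StartsCtx st h (u ++ v) (u.length + r)} : Set ℕ) =
          {r | r ≤ q ∧ StartsCtx st h v r} := by
        ext r
        simp only [Set.mem_setOf_eq]
        rcases Nat.eq_zero_or_pos r with rfl | hr
        · simp only [Nat.add_zero]
          constructor
          · rintro ⟨-, hsc⟩; exact absurd (startsCtx_boundary st h hsc) hv0
          · rintro ⟨-, hsc⟩; exact absurd hsc hv0
        · exact and_congr_right fun _ => startsCtx_append_right st h hr
      rw [step1 q, hVW, hWv q]
      omega

end KScopedAux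

/-- `k`-scoped well-matched words are closed under concatenation. -/
theorem kscoped_wellMatched_append {σ : Type*} {n : ℕ} (st : σ → Fin n)
    (kind : σ → SymKind) (k : ℕ) (u v : List σ)
    (hu : KScoped st kind k u) (hu' : WellMatchedAll st kind u)
    (hv : KScoped st kind k v) (hv' : WellMatchedAll st kind v) :
    KScoped st kind k (u ++ v) := by
  intro hh i j hm
  have hm' : (i, j) ∈ mpairsH st kind hh (u ++ v) 0 [] := hm
  rw [KScopedAux.mpairs_append] at hm'
  have hnil : KScopedAux.stkAfter st kind hh u 0 [] = [] :=
    KScopedAux.stkAfter_nil_of_wm st kind hh u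
      (fun i a ha has hak => (hu' hh).1 i a ha has hak)
  rw [hnil, List.mem_append] at hm'
  rcases hm' with hm' | hm'
  · have hb := KScopedAux.mpairs_bound st kind hh u 0 [] (by simp) i j hm'
    have hji : i < u.length := by omega
    have hjj : j < u.length := by omega
    rw [KScopedAux.ctxIdx_append_left st hh v hjj,
      KScopedAux.ctxIdx_append_left st hh v hji]
    exact hu hh i j hm'
  · have hs := KScopedAux.mpairs_shift st kind hh v 0 u.length []
    simp only [List.map_nil] at hs
    rw [hs, List.mem_map] at hm'
    obtain ⟨⟨i', j'⟩, hmem, heq⟩ := hm'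
    have hi : i = u.length + i' := by
      have := congrArg Prod.fst heq; simp at this; omega
    have hj : j = u.length + j' := by
      have := congrArg Prod.snd heq; simp at this; omega
    obtain ⟨δ, hδ⟩ := KScopedAux.exists_delta st hh u v
    have e1 := hδ i'
    have e2 := hδ j'
    have hineq := hv hh i' j' hmem
    rw [hi, hj]
    omega
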